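/- Let t ≥ 1 and s > 8 be integers and n = 3st, and let m = (s−1)n²/(3s). Then every graph with n vertices and m edges has booksize at least (s−2)n/(3s), and there exists a graph with n vertices and m edges whose booksize equals (s−2)n/(3s); that is, β(n, m) = (s−2)n/(3s). -/

import Mathlib

open Finset
open scoped Classical

/-- The booksize of `G`: the maximum over edges `uv` of `G` of the number of
common neighbors of `u` and `v` (`0` if `G` has no edges). -/
noncomputable def bk {V : Type*} [Fintype V] (G : SimpleGraph V) : ℕ :=
  (Finset.univ.filter fun p : V × V => G.Adj p.1 p.2).sup
    fun p => (G.neighborSet p.1 ∩ G.neighborSet p.2).ncard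

/-- The number of `s`-cliques of `G`. -/
noncomputable def cliqueCount {V : Type*} [Fintype V] (G : SimpleGraph V) (s : ℕ) : ℕ :=
  (G.cliqueFinset s).card

/-- The number of induced subgraphs of `G` isomorphic to `H`. -/
noncomputable def inducedCopies {V W : Type*} [Fintype V] (G : SimpleGraph V)
    (H : SimpleGraph W) : ℕ :=
  {s : Set V | Nonempty (G.induce s ≃g H)}.ncard

/-- `K4j j` is the graph `K₄^(j)`: a triangle on `{0,1,2}` together with the vertex `3`
joined to precisely `3 - j` of its vertices. -/
def K4j (j : ℕ) : SimpleGraph (Fin 4) :=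
  SimpleGraph.fromRel fun a b => (a.val < 3 ∧ b.val < 3) ∨ (a.val = 3 ∧ b.val < 3 - j)

/-- The codegree function `d̂`, as a function on unordered pairs. -/
noncomputable def codegSym {V : Type*} [Fintype V] (G : SimpleGraph V) : Sym2 V → ℕ :=
  Sym2.lift ⟨fun u v => (G.neighborSet u ∩ G.neighborSet v).ncard,
    fun u v => by simp [Set.inter_comm]⟩

/-- `|Γ'(u) ∩ Γ'(v)|`, where `Γ'(x) = V ∖ Γ(x)`, as a function on unordered pairs. -/
noncomputable def noncodegSym {V : Type*} [Fintype V] (G : SimpleGraph V) : Sym2 V → ℕ :=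
  Sym2.lift ⟨fun u v => ((G.neighborSet u)ᶜ ∩ (G.neighborSet v)ᶜ).ncard,
    fun u v => by simp [Set.inter_comm]⟩

set_option maxHeartbeats 1000000

section Aux
open SimpleGraph

private lemma perEdgeZ (s t b y : ℤ) (hs : 9 ≤ s) (ht : 1 ≤ t)
    (hb0 : 0 ≤ b) (hb : b + 1 ≤ (s-2)*t) (hy : y ≤ 3*s*t + b) :
    6*(b*b) + 2*(3*s*t)*b + 3*((s-2)*t-1)*y + 3 ≤ 3*y*b + 6*((s-2)*t-1)*(2*(s-1)*t) := by
  rcases le_or_gt y (2*(2*(s-1)*t)) with hz | hz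
  · rcases eq_or_lt_of_le hb0 with hb1 | hb1
    · have hb1 : b = 0 := hb1.symm
      subst hb1
      nlinarith [mul_nonneg (sub_nonneg.2 ht) (sub_nonneg.2 hs),
        mul_nonneg (mul_nonneg (sub_nonneg.2 ht) (sub_nonneg.2 hs)) (sub_nonneg.2 ht),
        mul_pos (by linarith : (0:ℤ) < (s-2)*t - 1 + 1) (by linarith : (0:ℤ) < t)]
    · nlinarith [mul_nonneg (by linarith : (0:ℤ) ≤ b - 1) (by linarith : (0:ℤ) ≤ (s-2)*t - 1 - b),
        mul_nonneg (by linarith : (0:ℤ) ≤ 2*(2*(s-1)*t) - y) (by linarith : (0:ℤ) ≤ (s-2)*t - 1 - b)]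
  · have hzub : y - 2*(2*(s-1)*t) ≤ 2*t - 1 := by nlinarith
    nlinarith [mul_nonneg (by linarith : (0:ℤ) ≤ (s-2)*t - 1 - b) (by linarith : (0:ℤ) ≤ b - (y - 3*s*t)),
      mul_nonneg (by linarith : (0:ℤ) ≤ y - 2*(2*(s-1)*t) - 1) (by linarith : (0:ℤ) ≤ 2*t - 1 - (y - 2*(2*(s-1)*t))),
      mul_nonneg (by linarith : (0:ℤ) ≤ t - 1) (by linarith : (0:ℤ) ≤ s - 9),
      mul_pos (by linarith : (0:ℤ) < t) (by linarith : (0:ℤ) < s - 4)]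

private lemma card3 {V : Type*} [Fintype V] [DecidableEq V] (A B C : Finset V) :
    A.card + B.card + C.card ≤ (A ∩ B).card + (A ∩ C).card + (B ∩ C).card + Fintype.card V := by
  have h1 : (A ∪ B).card + (A ∩ B).card = A.card + B.card := Finset.card_union_add_card_inter A B
  have h2 : ((A ∪ B) ∪ C).card + ((A ∪ B) ∩ C).card = (A ∪ B).card + C.card :=
    Finset.card_union_add_card_inter _ _
  have h3 : (A ∪ B) ∩ C = (A ∩ C) ∪ (B ∩ C) := Finset.union_inter_distrib_right A B C
  rw [h3] at h2
  have h4 : ((A ∩ C) ∪ (B ∩ C)).card ≤ (A ∩ C).card + (B ∩ C).card := Finset.card_union_le _ _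
  have h5 : ((A ∪ B) ∪ C).card ≤ Fintype.card V := Finset.card_le_univ _
  omega

private lemma lowerBound {V : Type*} [Fintype V] (s t : ℕ) (hs : 8 < s) (ht : 1 ≤ t)
    (G : SimpleGraph V) (hcard : Fintype.card V = 3*s*t)
    (hedge : G.edgeFinset.card = 3*s*((s-1)*(t*t))) :
    (s-2)*t ≤ bk G := by
  classical
  by_contra hq
  push_neg at hq
  set d : V → ℕ := fun v => G.degree v with hd
  set cb : V → V → ℕ := fun u v => (G.neighborFinset u ∩ G.neighborFinset v).card with hcb
  have hnbF : ∀ u : V, univ.filter (fun w => G.Adj u w) = G.neighborFinset u := by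
    intro u; ext w; simp [SimpleGraph.mem_neighborFinset]
  have hcb_count : ∀ u v : V, (univ.filter (fun w => G.Adj u w ∧ G.Adj v w)).card = cb u v := by
    intro u v; rw [Finset.filter_and, hnbF, hnbF]
  have hdeg : ∀ u : V, (G.neighborFinset u).card = d u := fun u =>
    G.card_neighborFinset_eq_degree u
  have hcbsymm : ∀ u v : V, cb u v = cb v u := by
    intro u v; simp only [hcb]; rw [Finset.inter_comm]
  -- triple-sum machinery
  have permSum : ∀ (σ : (V×V×V) ≃ (V×V×V)) (g : V×V×V → ℕ),
      (∀ x : V×V×V, (G.Adj (σ x).1 (σ x).2.1 ∧ G.Adj (σ x).1 (σ x).2.2 ∧ G.Adj (σ x).2.1 (σ x).2.2)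
        ↔ (G.Adj x.1 x.2.1 ∧ G.Adj x.1 x.2.2 ∧ G.Adj x.2.1 x.2.2)) →
      ∑ x : V×V×V, (if G.Adj x.1 x.2.1 ∧ G.Adj x.1 x.2.2 ∧ G.Adj x.2.1 x.2.2 then g x else 0)
        = ∑ x : V×V×V, (if G.Adj x.1 x.2.1 ∧ G.Adj x.1 x.2.2 ∧ G.Adj x.2.1 x.2.2 then g (σ x) else 0) := by
    intro σ g hσ
    calc ∑ x : V×V×V, (if G.Adj x.1 x.2.1 ∧ G.Adj x.1 x.2.2 ∧ G.Adj x.2.1 x.2.2 then g x else 0)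
        = ∑ x : V×V×V, (if G.Adj (σ x).1 (σ x).2.1 ∧ G.Adj (σ x).1 (σ x).2.2 ∧ G.Adj (σ x).2.1 (σ x).2.2 then g (σ x) else 0) :=
          (Equiv.sum_comp σ (fun x => if G.Adj x.1 x.2.1 ∧ G.Adj x.1 x.2.2 ∧ G.Adj x.2.1 x.2.2 then g x else 0)).symm
      _ = ∑ x : V×V×V, (if G.Adj x.1 x.2.1 ∧ G.Adj x.1 x.2.2 ∧ G.Adj x.2.1 x.2.2 then g (σ x) else 0) :=
          Finset.sum_congr rfl fun x _ => if_congr (hσ x) rfl rfl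
  have collapse : ∀ F : V → V → ℕ,
      ∑ x : V×V×V, (if G.Adj x.1 x.2.1 ∧ G.Adj x.1 x.2.2 ∧ G.Adj x.2.1 x.2.2 then F x.1 x.2.1 else 0)
        = ∑ u : V, ∑ v : V, (if G.Adj u v then cb u v * F u v else 0) := by
    intro F
    rw [Fintype.sum_prod_type]
    refine Finset.sum_congr rfl fun u _ => ?_
    rw [Fintype.sum_prod_type]
    refine Finset.sum_congr rfl fun v _ => ?_
    by_cases h : G.Adj u v
    · rw [if_pos h]
      calc ∑ w : V, (if G.Adj u v ∧ G.Adj u w ∧ G.Adj v w then F u v else 0)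
          = ∑ w : V, (if G.Adj u w ∧ G.Adj v w then F u v else 0) :=
            Finset.sum_congr rfl fun w _ => if_congr (by simp [h]) rfl rfl
        _ = ∑ w ∈ univ.filter (fun w => G.Adj u w ∧ G.Adj v w), F u v := (Finset.sum_filter _ _).symm
        _ = (univ.filter (fun w => G.Adj u w ∧ G.Adj v w)).card * F u v := by
            rw [Finset.sum_const, smul_eq_mul]
        _ = cb u v * F u v := by rw [hcb_count]
    · simp [h]
  have splitSum : ∀ f g : V×V×V → ℕ,
      (∑ x : V×V×V, if G.Adj x.1 x.2.1 ∧ G.Adj x.1 x.2.2 ∧ G.Adj x.2.1 x.2.2 then f x + g x else 0)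
        = (∑ x : V×V×V, if G.Adj x.1 x.2.1 ∧ G.Adj x.1 x.2.2 ∧ G.Adj x.2.1 x.2.2 then f x else 0)
          + ∑ x : V×V×V, (if G.Adj x.1 x.2.1 ∧ G.Adj x.1 x.2.2 ∧ G.Adj x.2.1 x.2.2 then g x else 0) := by
    intro f g
    rw [← Finset.sum_add_distrib]
    refine Finset.sum_congr rfl fun x _ => ?_
    by_cases h : G.Adj x.1 x.2.1 ∧ G.Adj x.1 x.2.2 ∧ G.Adj x.2.1 x.2.2 <;> simp [h]
  -- pointwise inclusion-exclusion bound
  have master3 : (∑ x : V×V×V, if G.Adj x.1 x.2.1 ∧ G.Adj x.1 x.2.2 ∧ G.Adj x.2.1 x.2.2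
        then d x.1 + (d x.2.1 + d x.2.2) else 0)
      ≤ ∑ x : V×V×V, (if G.Adj x.1 x.2.1 ∧ G.Adj x.1 x.2.2 ∧ G.Adj x.2.1 x.2.2
        then cb x.1 x.2.1 + (cb x.1 x.2.2 + (cb x.2.1 x.2.2 + 3*s*t)) else 0) := by
    refine Finset.sum_le_sum fun x _ => ?_
    by_cases h : G.Adj x.1 x.2.1 ∧ G.Adj x.1 x.2.2 ∧ G.Adj x.2.1 x.2.2
    · rw [if_pos h, if_pos h]
      have h3 := card3 (G.neighborFinset x.1) (G.neighborFinset x.2.1) (G.neighborFinset x.2.2)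
      rw [hcard] at h3
      have e1 := hdeg x.1; have e2 := hdeg x.2.1; have e3 := hdeg x.2.2
      have c1 : (G.neighborFinset x.1 ∩ G.neighborFinset x.2.1).card = cb x.1 x.2.1 := rfl
      have c2 : (G.neighborFinset x.1 ∩ G.neighborFinset x.2.2).card = cb x.1 x.2.2 := rfl
      have c3 : (G.neighborFinset x.2.1 ∩ G.neighborFinset x.2.2).card = cb x.2.1 x.2.2 := rfl
      omega
    · simp [h]
    -- permuted pieces
  have pieceDW : (∑ x : V×V×V, if G.Adj x.1 x.2.1 ∧ G.Adj x.1 x.2.2 ∧ G.Adj x.2.1 x.2.2 then d x.2.2 else 0)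
      = ∑ x : V×V×V, (if G.Adj x.1 x.2.1 ∧ G.Adj x.1 x.2.2 ∧ G.Adj x.2.1 x.2.2 then d x.1 else 0) := by
    have h := permSum ⟨fun x => (x.2.2, x.2.1, x.1), fun x => (x.2.2, x.2.1, x.1),
      fun ⟨a,b,c⟩ => rfl, fun ⟨a,b,c⟩ => rfl⟩ (fun x => d x.2.2) ?_
    · exact h.trans (Finset.sum_congr rfl fun x _ => rfl)
    · rintro ⟨a,b,c⟩
      exact ⟨fun ⟨h1,h2,h3⟩ => ⟨h3.symm, h2.symm, h1.symm⟩,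
        fun ⟨h1,h2,h3⟩ => ⟨h3.symm, h2.symm, h1.symm⟩⟩
  have pieceB2 : (∑ x : V×V×V, if G.Adj x.1 x.2.1 ∧ G.Adj x.1 x.2.2 ∧ G.Adj x.2.1 x.2.2 then cb x.1 x.2.2 else 0)
      = ∑ x : V×V×V, (if G.Adj x.1 x.2.1 ∧ G.Adj x.1 x.2.2 ∧ G.Adj x.2.1 x.2.2 then cb x.1 x.2.1 else 0) := by
    have h := permSum ⟨fun x => (x.1, x.2.2, x.2.1), fun x => (x.1, x.2.2, x.2.1),
      fun ⟨a,b,c⟩ => rfl, fun ⟨a,b,c⟩ => rfl⟩ (fun x => cb x.1 x.2.2) ?_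
    · exact h.trans (Finset.sum_congr rfl fun x _ => rfl)
    · rintro ⟨a,b,c⟩
      exact ⟨fun ⟨h1,h2,h3⟩ => ⟨h2, h1, h3.symm⟩, fun ⟨h1,h2,h3⟩ => ⟨h2, h1, h3.symm⟩⟩
  have pieceB3 : (∑ x : V×V×V, if G.Adj x.1 x.2.1 ∧ G.Adj x.1 x.2.2 ∧ G.Adj x.2.1 x.2.2 then cb x.2.1 x.2.2 else 0)
      = ∑ x : V×V×V, (if G.Adj x.1 x.2.1 ∧ G.Adj x.1 x.2.2 ∧ G.Adj x.2.1 x.2.2 then cb x.1 x.2.2 else 0) := by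
    have h := permSum ⟨fun x => (x.2.1, x.1, x.2.2), fun x => (x.2.1, x.1, x.2.2),
      fun ⟨a,b,c⟩ => rfl, fun ⟨a,b,c⟩ => rfl⟩ (fun x => cb x.2.1 x.2.2) ?_
    · exact h.trans (Finset.sum_congr rfl fun x _ => rfl)
    · rintro ⟨a,b,c⟩
      exact ⟨fun ⟨h1,h2,h3⟩ => ⟨h1.symm, h3, h2⟩, fun ⟨h1,h2,h3⟩ => ⟨h1.symm, h3, h2⟩⟩
  -- pair-level swap
  have pairSwap : ∀ F : V → V → ℕ,
      (∑ u : V, ∑ v : V, if G.Adj u v then F u v else 0)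
        = ∑ u : V, ∑ v : V, (if G.Adj u v then F v u else 0) := by
    intro F
    rw [Finset.sum_comm]
    exact Finset.sum_congr rfl fun u _ => Finset.sum_congr rfl fun v _ =>
      if_congr (G.adj_comm v u) rfl rfl
    -- beta-normal split equalities
  have l1 : (∑ x : V×V×V, if G.Adj x.1 x.2.1 ∧ G.Adj x.1 x.2.2 ∧ G.Adj x.2.1 x.2.2 then d x.1 + (d x.2.1 + d x.2.2) else 0)
      = (∑ x : V×V×V, if G.Adj x.1 x.2.1 ∧ G.Adj x.1 x.2.2 ∧ G.Adj x.2.1 x.2.2 then d x.1 else 0)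
        + ∑ x : V×V×V, (if G.Adj x.1 x.2.1 ∧ G.Adj x.1 x.2.2 ∧ G.Adj x.2.1 x.2.2 then d x.2.1 + d x.2.2 else 0) := by
    simpa only [] using splitSum (fun x => d x.1) (fun x => d x.2.1 + d x.2.2)
  have l2 : (∑ x : V×V×V, if G.Adj x.1 x.2.1 ∧ G.Adj x.1 x.2.2 ∧ G.Adj x.2.1 x.2.2 then d x.2.1 + d x.2.2 else 0)
      = (∑ x : V×V×V, if G.Adj x.1 x.2.1 ∧ G.Adj x.1 x.2.2 ∧ G.Adj x.2.1 x.2.2 then d x.2.1 else 0)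
        + ∑ x : V×V×V, (if G.Adj x.1 x.2.1 ∧ G.Adj x.1 x.2.2 ∧ G.Adj x.2.1 x.2.2 then d x.2.2 else 0) := by
    simpa only [] using splitSum (fun x => d x.2.1) (fun x => d x.2.2)
  have r1 : (∑ x : V×V×V, if G.Adj x.1 x.2.1 ∧ G.Adj x.1 x.2.2 ∧ G.Adj x.2.1 x.2.2 then cb x.1 x.2.1 + (cb x.1 x.2.2 + (cb x.2.1 x.2.2 + 3*s*t)) else 0)
      = (∑ x : V×V×V, if G.Adj x.1 x.2.1 ∧ G.Adj x.1 x.2.2 ∧ G.Adj x.2.1 x.2.2 then cb x.1 x.2.1 else 0)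
        + ∑ x : V×V×V, (if G.Adj x.1 x.2.1 ∧ G.Adj x.1 x.2.2 ∧ G.Adj x.2.1 x.2.2 then cb x.1 x.2.2 + (cb x.2.1 x.2.2 + 3*s*t) else 0) := by
    simpa only [] using splitSum (fun x => cb x.1 x.2.1) (fun x => cb x.1 x.2.2 + (cb x.2.1 x.2.2 + 3*s*t))
  have r2 : (∑ x : V×V×V, if G.Adj x.1 x.2.1 ∧ G.Adj x.1 x.2.2 ∧ G.Adj x.2.1 x.2.2 then cb x.1 x.2.2 + (cb x.2.1 x.2.2 + 3*s*t) else 0)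
      = (∑ x : V×V×V, if G.Adj x.1 x.2.1 ∧ G.Adj x.1 x.2.2 ∧ G.Adj x.2.1 x.2.2 then cb x.1 x.2.2 else 0)
        + ∑ x : V×V×V, (if G.Adj x.1 x.2.1 ∧ G.Adj x.1 x.2.2 ∧ G.Adj x.2.1 x.2.2 then cb x.2.1 x.2.2 + 3*s*t else 0) := by
    simpa only [] using splitSum (fun x => cb x.1 x.2.2) (fun x => cb x.2.1 x.2.2 + 3*s*t)
  have r3 : (∑ x : V×V×V, if G.Adj x.1 x.2.1 ∧ G.Adj x.1 x.2.2 ∧ G.Adj x.2.1 x.2.2 then cb x.2.1 x.2.2 + 3*s*t else 0)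
      = (∑ x : V×V×V, if G.Adj x.1 x.2.1 ∧ G.Adj x.1 x.2.2 ∧ G.Adj x.2.1 x.2.2 then cb x.2.1 x.2.2 else 0)
        + ∑ x : V×V×V, (if G.Adj x.1 x.2.1 ∧ G.Adj x.1 x.2.2 ∧ G.Adj x.2.1 x.2.2 then 3*s*t else 0) := by
    simpa only [] using splitSum (fun x => cb x.2.1 x.2.2) (fun _ => 3*s*t)
  -- collapse equalities in beta-normal form
  have eDu : (∑ x : V×V×V, if G.Adj x.1 x.2.1 ∧ G.Adj x.1 x.2.2 ∧ G.Adj x.2.1 x.2.2 then d x.1 else 0)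
      = ∑ u : V, ∑ v : V, (if G.Adj u v then cb u v * d u else 0) := by
    simpa only [] using collapse (fun u v => d u)
  have eDv : (∑ x : V×V×V, if G.Adj x.1 x.2.1 ∧ G.Adj x.1 x.2.2 ∧ G.Adj x.2.1 x.2.2 then d x.2.1 else 0)
      = ∑ u : V, ∑ v : V, (if G.Adj u v then cb u v * d v else 0) := by
    simpa only [] using collapse (fun u v => d v)
  have eCC : (∑ x : V×V×V, if G.Adj x.1 x.2.1 ∧ G.Adj x.1 x.2.2 ∧ G.Adj x.2.1 x.2.2 then cb x.1 x.2.1 else 0)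
      = ∑ u : V, ∑ v : V, (if G.Adj u v then cb u v * cb u v else 0) := by
    simpa only [] using collapse (fun u v => cb u v)
  have eCn : (∑ x : V×V×V, if G.Adj x.1 x.2.1 ∧ G.Adj x.1 x.2.2 ∧ G.Adj x.2.1 x.2.2 then 3*s*t else 0)
      = ∑ u : V, ∑ v : V, (if G.Adj u v then cb u v * (3*s*t) else 0) := by
    simpa only [] using collapse (fun _ _ => 3*s*t)
  have swapDV : (∑ u : V, ∑ v : V, if G.Adj u v then cb u v * d v else 0)
      = ∑ u : V, ∑ v : V, (if G.Adj u v then cb u v * d u else 0) := by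
    refine (pairSwap (fun u v => cb u v * d v)).trans ?_
    exact Finset.sum_congr rfl fun u _ => Finset.sum_congr rfl fun v _ =>
      if_congr Iff.rfl (by rw [hcbsymm v u]) rfl
  have masterPair : 3 * (∑ u : V, ∑ v : V, if G.Adj u v then cb u v * d u else 0)
      ≤ 3 * (∑ u : V, ∑ v : V, if G.Adj u v then cb u v * cb u v else 0)
        + ∑ u : V, ∑ v : V, (if G.Adj u v then cb u v * (3*s*t) else 0) := by
    rw [l1, l2, r1, r2, r3, eDu, eDv, eCC, eCn, pieceDW, pieceB3, pieceB2, eDu, eCC, swapDV] at master3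
    omega
    -- pair-set W and conversions
  set W : Finset (V×V) := univ.filter (fun p : V×V => G.Adj p.1 p.2) with hWdef
  have toW : ∀ F : V → V → ℕ, ∑ p ∈ W, F p.1 p.2
      = ∑ u : V, ∑ v : V, (if G.Adj u v then F u v else 0) := by
    intro F
    rw [hWdef, Finset.sum_filter, Fintype.sum_prod_type]
  have countAdj : ∀ (u : V) (c : ℕ), (∑ v : V, if G.Adj u v then c else 0) = d u * c := by
    intro u c
    rw [← Finset.sum_filter, hnbF u, Finset.sum_const, hdeg, smul_eq_mul]
  have hQ1 : (∑ p ∈ W, d p.1) = ∑ u : V, d u * d u := by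
    rw [toW (fun u v => d u)]
    exact Finset.sum_congr rfl fun u _ => countAdj u (d u)
  have hQ2 : (∑ p ∈ W, d p.2) = ∑ u : V, d u * d u := by
    rw [toW (fun u v => d v), pairSwap (fun u v => d v)]
    exact Finset.sum_congr rfl fun u _ => countAdj u (d u)
  have hE : W.card = ∑ u : V, d u := by
    rw [Finset.card_eq_sum_ones, toW (fun _ _ => 1)]
    exact Finset.sum_congr rfl fun u _ => (countAdj u 1).trans (mul_one _)
  have hS1' : (∑ p ∈ W, cb p.1 p.2 * d p.2) = ∑ p ∈ W, cb p.1 p.2 * d p.1 := by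
    rw [toW (fun u v => cb u v * d v), toW (fun u v => cb u v * d u), swapDV]
  have masterW : 3 * (∑ p ∈ W, cb p.1 p.2 * d p.1)
      ≤ 3 * (∑ p ∈ W, cb p.1 p.2 * cb p.1 p.2) + ∑ p ∈ W, cb p.1 p.2 * (3*s*t) := by
    rw [toW (fun u v => cb u v * d u), toW (fun u v => cb u v * cb u v),
      toW (fun u v => cb u v * (3*s*t))]
    exact masterPair
  have h1s : 1 ≤ s := by omega
  have h2s : 2 ≤ s := by omega
  have masterW2 : 3 * (∑ p ∈ W, cb p.1 p.2 * d p.1)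
      ≤ 3 * (∑ p ∈ W, cb p.1 p.2 * cb p.1 p.2) + (∑ p ∈ W, cb p.1 p.2) * (3*s*t) := by
    rw [Finset.sum_mul]; exact masterW
  have hdegsum : (∑ u : V, d u) = 2 * (3*s*((s-1)*(t*t))) := by
    simp only [hd]
    rw [G.sum_degrees_eq_twice_card_edges, hedge]
  have hbW : ∀ p ∈ W, cb p.1 p.2 + 1 ≤ (s-2)*t := by
    intro p hp
    have h1 : (G.neighborSet p.1 ∩ G.neighborSet p.2).ncard ≤ bk G := by
      have hmem : p ∈ univ.filter (fun p : V×V => G.Adj p.1 p.2) := by rw [← hWdef]; exact hp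
      exact Finset.le_sup (f := fun p : V×V => (G.neighborSet p.1 ∩ G.neighborSet p.2).ncard) hmem
    have h2 : (G.neighborSet p.1 ∩ G.neighborSet p.2).ncard = cb p.1 p.2 := by
      rw [Set.ncard_eq_toFinset_card']
      simp only [hcb]
      congr 1
      ext w
      simp [Set.mem_toFinset, SimpleGraph.mem_neighborFinset, SimpleGraph.mem_neighborSet]
    omega
  have hyW : ∀ p ∈ W, d p.1 + d p.2 ≤ 3*s*t + cb p.1 p.2 := by
    intro p hp
    have h1 := Finset.card_union_add_card_inter (G.neighborFinset p.1) (G.neighborFinset p.2)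
    have h2 : (G.neighborFinset p.1 ∪ G.neighborFinset p.2).card ≤ Fintype.card V :=
      Finset.card_le_univ _
    rw [hcard] at h2
    have e1 := hdeg p.1
    have e2 := hdeg p.2
    have c1 : (G.neighborFinset p.1 ∩ G.neighborFinset p.2).card = cb p.1 p.2 := rfl
    omega
  have hS9 : (9:ℤ) ≤ (s:ℤ) := by exact_mod_cast hs
  have hT1 : (1:ℤ) ≤ (t:ℤ) := by exact_mod_cast ht
  have hper : ∀ p ∈ W, (6*((cb p.1 p.2 : ℤ) * (cb p.1 p.2 : ℤ))
        + (2*(3*(s:ℤ)*(t:ℤ)))*(cb p.1 p.2 : ℤ)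
        + (3*(((s:ℤ)-2)*(t:ℤ)-1))*(d p.1 : ℤ)
        + (3*(((s:ℤ)-2)*(t:ℤ)-1))*(d p.2 : ℤ) + 3)
      ≤ (3*((cb p.1 p.2 : ℤ) * (d p.1 : ℤ)) + 3*((cb p.1 p.2 : ℤ) * (d p.2 : ℤ))
        + 6*(((s:ℤ)-2)*(t:ℤ)-1)*(2*((s:ℤ)-1)*(t:ℤ))) := by
    intro p hp
    have hb' := hbW p hp
    have hy' := hyW p hp
    have hbz : (cb p.1 p.2 : ℤ) + 1 ≤ ((s:ℤ)-2)*(t:ℤ) := by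
      have h := (Nat.cast_le (α := ℤ)).2 hb'
      push_cast [Nat.cast_sub h2s] at h
      linarith
    have hyz : ((d p.1 : ℤ) + (d p.2 : ℤ)) ≤ 3*(s:ℤ)*(t:ℤ) + (cb p.1 p.2 : ℤ) := by
      exact_mod_cast hy'
    have key := perEdgeZ (s:ℤ) (t:ℤ) (cb p.1 p.2 : ℤ) ((d p.1 : ℤ)+(d p.2 : ℤ)) hS9 hT1
      (Int.natCast_nonneg _) hbz hyz
    linarith only [key]
  have hsum := Finset.sum_le_sum hper
  have eL : (∑ p ∈ W, (6*((cb p.1 p.2 : ℤ) * (cb p.1 p.2 : ℤ))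
        + (2*(3*(s:ℤ)*(t:ℤ)))*(cb p.1 p.2 : ℤ)
        + (3*(((s:ℤ)-2)*(t:ℤ)-1))*(d p.1 : ℤ)
        + (3*(((s:ℤ)-2)*(t:ℤ)-1))*(d p.2 : ℤ) + 3))
      = 6*((∑ p ∈ W, cb p.1 p.2 * cb p.1 p.2 : ℕ) : ℤ)
        + (2*(3*(s:ℤ)*(t:ℤ)))*((∑ p ∈ W, cb p.1 p.2 : ℕ) : ℤ)
        + (3*(((s:ℤ)-2)*(t:ℤ)-1))*((∑ p ∈ W, d p.1 : ℕ) : ℤ)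
        + (3*(((s:ℤ)-2)*(t:ℤ)-1))*((∑ p ∈ W, d p.2 : ℕ) : ℤ)
        + 3*(W.card : ℤ) := by
    rw [Finset.sum_add_distrib, Finset.sum_add_distrib, Finset.sum_add_distrib,
      Finset.sum_add_distrib, ← Finset.mul_sum, ← Finset.mul_sum, ← Finset.mul_sum,
      ← Finset.mul_sum, Finset.sum_const, nsmul_eq_mul]
    push_cast
    ring
  have eR : (∑ p ∈ W, (3*((cb p.1 p.2 : ℤ) * (d p.1 : ℤ)) + 3*((cb p.1 p.2 : ℤ) * (d p.2 : ℤ))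
        + 6*(((s:ℤ)-2)*(t:ℤ)-1)*(2*((s:ℤ)-1)*(t:ℤ))))
      = 3*((∑ p ∈ W, cb p.1 p.2 * d p.1 : ℕ) : ℤ) + 3*((∑ p ∈ W, cb p.1 p.2 * d p.2 : ℕ) : ℤ)
        + (W.card : ℤ)*(6*(((s:ℤ)-2)*(t:ℤ)-1)*(2*((s:ℤ)-1)*(t:ℤ))) := by
    rw [Finset.sum_add_distrib, Finset.sum_add_distrib, ← Finset.mul_sum, ← Finset.mul_sum,
      Finset.sum_const, nsmul_eq_mul]
    push_cast
    ring
  rw [eL, eR, hQ1, hQ2, hS1', hE, hdegsum] at hsum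
  have hval : ((2 * (3*s*((s-1)*(t*t))) : ℕ) : ℤ)
      = 2*(3*(s:ℤ)*(((s:ℤ)-1)*((t:ℤ)*(t:ℤ)))) := by
    push_cast [Nat.cast_sub h1s]
    ring
  rw [hval] at hsum
  have zM : 3*((∑ p ∈ W, cb p.1 p.2 * d p.1 : ℕ) : ℤ)
      ≤ 3*((∑ p ∈ W, cb p.1 p.2 * cb p.1 p.2 : ℕ) : ℤ)
        + ((∑ p ∈ W, cb p.1 p.2 : ℕ) : ℤ)*(3*(s:ℤ)*(t:ℤ)) := by
    exact_mod_cast masterW2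
  have zCS : (2*(3*(s:ℤ)*(((s:ℤ)-1)*((t:ℤ)*(t:ℤ))))) * (2*(3*(s:ℤ)*(((s:ℤ)-1)*((t:ℤ)*(t:ℤ)))))
      ≤ (3*(s:ℤ)*(t:ℤ)) * ((∑ u : V, d u * d u : ℕ) : ℤ) := by
    have hcs0 := sq_sum_le_card_mul_sum_sq (s := (univ : Finset V)) (f := fun v => ((d v : ℕ) : ℤ))
    rw [Finset.card_univ, hcard] at hcs0
    have e1 : (∑ v : V, ((d v : ℕ) : ℤ)) = ((∑ u : V, d u : ℕ) : ℤ) := by push_cast; rfl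
    have e2 : (∑ v : V, ((d v : ℕ) : ℤ)^2) = ((∑ u : V, d u * d u : ℕ) : ℤ) := by
      push_cast
      exact Finset.sum_congr rfl fun v _ => (sq ((d v : ℕ) : ℤ)).symm ▸ rfl
    rw [e1, e2, hdegsum, hval] at hcs0
    calc (2*(3*(s:ℤ)*(((s:ℤ)-1)*((t:ℤ)*(t:ℤ))))) * (2*(3*(s:ℤ)*(((s:ℤ)-1)*((t:ℤ)*(t:ℤ)))))
        = (2*(3*(s:ℤ)*(((s:ℤ)-1)*((t:ℤ)*(t:ℤ)))))^2 := by ring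
      _ ≤ ((3*s*t : ℕ) : ℤ) * ((∑ u : V, d u * d u : ℕ) : ℤ) := hcs0
      _ = (3*(s:ℤ)*(t:ℤ)) * ((∑ u : V, d u * d u : ℕ) : ℤ) := by push_cast; ring
  -- final contradiction
  have step1 : 6*((((s:ℤ)-2)*(t:ℤ)-1))*((∑ u : V, d u * d u : ℕ) : ℤ)
      + 3*(2*(3*(s:ℤ)*(((s:ℤ)-1)*((t:ℤ)*(t:ℤ)))))
      ≤ 12*(2*(3*(s:ℤ)*(((s:ℤ)-1)*((t:ℤ)*(t:ℤ)))))*((((s:ℤ)-2)*(t:ℤ)-1))*((s:ℤ)-1)*(t:ℤ) := by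
    linarith only [hsum, zM]
  have h3ST : (0:ℤ) < 3*(s:ℤ)*(t:ℤ) := by
    have := mul_pos (show (0:ℤ) < 3*(s:ℤ) by linarith only [hS9]) (show (0:ℤ) < (t:ℤ) by linarith only [hT1])
    linarith only [this]
  have step2 := mul_le_mul_of_nonneg_left step1 (le_of_lt h3ST)
  have h7 : (7:ℤ)*(1:ℤ) ≤ ((s:ℤ)-2)*(t:ℤ) :=
    mul_le_mul (by linarith only [hS9]) hT1 (by norm_num) (by linarith only [hS9])
  have h6q1 : (0:ℤ) ≤ 6*((((s:ℤ)-2)*(t:ℤ)-1)) := by linarith only [h7]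
  have step3 := mul_le_mul_of_nonneg_left zCS h6q1
  have hMpos : (0:ℤ) < 3*(s:ℤ)*(((s:ℤ)-1)*((t:ℤ)*(t:ℤ))) :=
    mul_pos (show (0:ℤ) < 3*(s:ℤ) by linarith only [hS9])
      (mul_pos (show (0:ℤ) < (s:ℤ)-1 by linarith only [hS9])
        (mul_pos (show (0:ℤ) < (t:ℤ) by linarith only [hT1]) (show (0:ℤ) < (t:ℤ) by linarith only [hT1])))
  have hpos := mul_pos h3ST hMpos
  linarith only [step2, step3, hpos]

private def Hgraph (s t : ℕ) : SimpleGraph (Fin 3 × Fin s × Fin t) where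
  Adj a b := a.1 ≠ b.1 ∧ a.2.1 ≠ b.2.1
  symm := ⟨fun a b h => ⟨h.1.symm, h.2.symm⟩⟩
  loopless := ⟨fun a h => h.1 rfl⟩

private lemma Hgraph_nbF (s t : ℕ) (a : Fin 3 × Fin s × Fin t) :
    (Hgraph s t).neighborFinset a
      = ({a.1}ᶜ : Finset (Fin 3)) ×ˢ (({a.2.1}ᶜ : Finset (Fin s)) ×ˢ (univ : Finset (Fin t))) := by
  classical
  ext w
  simp only [SimpleGraph.mem_neighborFinset, Finset.mem_product, Finset.mem_compl,
    Finset.mem_singleton, Finset.mem_univ, and_true]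
  show a.1 ≠ w.1 ∧ a.2.1 ≠ w.2.1 ↔ ¬ w.1 = a.1 ∧ ¬ w.2.1 = a.2.1
  constructor
  · rintro ⟨h1, h2⟩; exact ⟨fun h => h1 h.symm, fun h => h2 h.symm⟩
  · rintro ⟨h1, h2⟩; exact ⟨fun h => h1 h.symm, fun h => h2 h.symm⟩

private lemma Hgraph_deg (s t : ℕ) (a : Fin 3 × Fin s × Fin t) :
    (Hgraph s t).degree a = 2 * ((s-1) * t) := by
  classical
  rw [← SimpleGraph.card_neighborFinset_eq_degree, Hgraph_nbF, Finset.card_product,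
    Finset.card_product, Finset.card_univ, Fintype.card_fin, Finset.card_compl,
    Finset.card_compl, Finset.card_singleton, Finset.card_singleton, Fintype.card_fin,
    Fintype.card_fin]

private lemma Hgraph_common (s t : ℕ) (a b : Fin 3 × Fin s × Fin t)
    (hab : (Hgraph s t).Adj a b) :
    ((Hgraph s t).neighborFinset a ∩ (Hgraph s t).neighborFinset b).card = (s-2) * t := by
  classical
  have hset : (Hgraph s t).neighborFinset a ∩ (Hgraph s t).neighborFinset b
      = (({a.1, b.1} : Finset (Fin 3))ᶜ) ×ˢ ((({a.2.1, b.2.1} : Finset (Fin s))ᶜ) ×ˢ (univ : Finset (Fin t))) := by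
    ext w
    simp only [Finset.mem_inter, SimpleGraph.mem_neighborFinset, Finset.mem_product,
      Finset.mem_compl, Finset.mem_insert, Finset.mem_singleton, Finset.mem_univ, and_true,
      not_or]
    show ((a.1 ≠ w.1 ∧ a.2.1 ≠ w.2.1) ∧ b.1 ≠ w.1 ∧ b.2.1 ≠ w.2.1)
        ↔ (¬ w.1 = a.1 ∧ ¬ w.1 = b.1) ∧ ¬ w.2.1 = a.2.1 ∧ ¬ w.2.1 = b.2.1
    constructor
    · rintro ⟨⟨h1, h2⟩, h3, h4⟩
      exact ⟨⟨fun h => h1 h.symm, fun h => h3 h.symm⟩, fun h => h2 h.symm, fun h => h4 h.symm⟩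
    · rintro ⟨⟨h1, h2⟩, h3, h4⟩
      exact ⟨⟨fun h => h1 h.symm, fun h => h3 h.symm⟩, fun h => h2 h.symm, fun h => h4 h.symm⟩
  rw [hset, Finset.card_product, Finset.card_product, Finset.card_univ, Fintype.card_fin,
    Finset.card_compl, Finset.card_compl, Finset.card_pair hab.1, Finset.card_pair hab.2,
    Fintype.card_fin, Fintype.card_fin]
  norm_num

private lemma ncard_common {V : Type*} [Fintype V] [DecidableEq V] (G : SimpleGraph V) (u v : V) :
    (G.neighborSet u ∩ G.neighborSet v).ncard
      = (G.neighborFinset u ∩ G.neighborFinset v).card := by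
  classical
  rw [Set.ncard_eq_toFinset_card']
  congr 1
  ext w
  simp [Set.mem_toFinset, SimpleGraph.mem_neighborFinset, SimpleGraph.mem_neighborSet]

private lemma construction (s t : ℕ) (hs : 8 < s) (ht : 1 ≤ t) :
    ∃ G : SimpleGraph (Fin (3*s*t)), G.edgeFinset.card = 3*s*((s-1)*(t*t)) ∧ bk G = (s-2)*t := by
  classical
  have hcardV : Fintype.card (Fin 3 × Fin s × Fin t) = 3*s*t := by
    simp [mul_assoc]
  let e : (Fin 3 × Fin s × Fin t) ≃ Fin (3*s*t) := Fintype.equivFinOfCardEq hcardV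
  set H := Hgraph s t with hH
  refine ⟨H.comap e.symm, ?_, ?_⟩
  · -- edge count
    have hnb : ∀ i, (H.comap (e.symm : Fin (3*s*t) → _)).neighborFinset i
        = (H.neighborFinset (e.symm i)).map e.toEmbedding := by
      intro i
      ext j
      simp only [SimpleGraph.mem_neighborFinset, SimpleGraph.comap_adj, Finset.mem_map_equiv]
    have hdegG : ∀ i, (H.comap (e.symm : Fin (3*s*t) → _)).degree i = 2*((s-1)*t) := by
      intro i
      rw [← SimpleGraph.card_neighborFinset_eq_degree, hnb, Finset.card_map,
        SimpleGraph.card_neighborFinset_eq_degree]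
      exact Hgraph_deg s t _
    have hsum := (H.comap (e.symm : Fin (3*s*t) → _)).sum_degrees_eq_twice_card_edges
    rw [Finset.sum_congr rfl (fun i _ => hdegG i), Finset.sum_const, Finset.card_univ,
      Fintype.card_fin, smul_eq_mul] at hsum
    have h2 : 2 * (H.comap (e.symm : Fin (3*s*t) → _)).edgeFinset.card
        = 2 * (3*s*((s-1)*(t*t))) := by
      rw [← hsum]
      generalize s - 1 = A
      ring
    exact Nat.eq_of_mul_eq_mul_left (by norm_num) h2
  · -- bk value
    have hnb : ∀ i, (H.comap (e.symm : Fin (3*s*t) → _)).neighborFinset i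
        = (H.neighborFinset (e.symm i)).map e.toEmbedding := by
      intro i
      ext j
      simp only [SimpleGraph.mem_neighborFinset, SimpleGraph.comap_adj, Finset.mem_map_equiv]
    have hcomG : ∀ p : (Fin (3*s*t)) × (Fin (3*s*t)),
        (H.comap (e.symm : Fin (3*s*t) → _)).Adj p.1 p.2 →
        ((H.comap (e.symm : Fin (3*s*t) → _)).neighborSet p.1
          ∩ (H.comap (e.symm : Fin (3*s*t) → _)).neighborSet p.2).ncard = (s-2)*t := by
      intro p hp
      rw [ncard_common]
      have hHc := Hgraph_common s t _ _ hp
      rw [← Finset.card_map e.toEmbedding, Finset.map_inter, ← hnb, ← hnb] at hHc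
      convert hHc
    apply le_antisymm
    · apply Finset.sup_le
      intro p hp
      rw [Finset.mem_filter] at hp
      exact le_of_eq (hcomG p hp.2)
    · have h0s : 0 < s := by omega
      have h1s : 1 < s := by omega
      have h0t : 0 < t := by omega
      set a0 : Fin 3 × Fin s × Fin t := (⟨0, by omega⟩, ⟨0, h0s⟩, ⟨0, h0t⟩) with ha0
      set b0 : Fin 3 × Fin s × Fin t := (⟨1, by omega⟩, ⟨1, h1s⟩, ⟨0, h0t⟩) with hb0
      have hab : H.Adj a0 b0 := by
        constructor
        · exact Fin.ne_of_val_ne (by norm_num)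
        · exact Fin.ne_of_val_ne (by norm_num)
      have hadjG : (H.comap (e.symm : Fin (3*s*t) → _)).Adj (e a0) (e b0) := by
        show H.Adj (e.symm (e a0)) (e.symm (e b0))
        simpa using hab
      have hmem : ((e a0, e b0) : Fin (3*s*t) × Fin (3*s*t))
          ∈ Finset.univ.filter (fun p : Fin (3*s*t) × Fin (3*s*t) =>
            (H.comap (e.symm : Fin (3*s*t) → _)).Adj p.1 p.2) :=
        Finset.mem_filter.2 ⟨Finset.mem_univ _, hadjG⟩
      have hle := Finset.le_sup (f := fun p : Fin (3*s*t) × Fin (3*s*t) =>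
        ((H.comap (e.symm : Fin (3*s*t) → _)).neighborSet p.1
          ∩ (H.comap (e.symm : Fin (3*s*t) → _)).neighborSet p.2).ncard) hmem
      have heq := hcomG (e a0, e b0) hadjG
      exact le_trans (le_of_eq heq.symm) hle

end Aux

theorem stmt10 (s t n m : ℕ) (ht : 1 ≤ t) (hs : 8 < s) (hn : n = 3 * s * t)
    (hm : m * (3 * s) = (s - 1) * n ^ 2) :
    (∀ G : SimpleGraph (Fin n), G.edgeFinset.card = m → (s - 2) * t ≤ bk G) ∧
    (∃ G : SimpleGraph (Fin n), G.edgeFinset.card = m ∧ bk G = (s - 2) * t) ∧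
    3 * s * ((s - 2) * t) = (s - 2) * n := by
  subst hn
  have h3s : 0 < 3 * s := by omega
  have hm' : m = 3*s*((s-1)*(t*t)) := by
    have h1 : (s - 1) * (3*s*t) ^ 2 = (3*s*((s-1)*(t*t))) * (3*s) := by
      generalize s - 1 = A
      ring
    rw [h1] at hm
    exact Nat.eq_of_mul_eq_mul_right h3s hm
  refine ⟨?_, ?_, ?_⟩
  · intro G hG
    exact lowerBound s t hs ht G (by simp) (hG.trans hm')
  · obtain ⟨G, h1, h2⟩ := construction s t hs ht
    exact ⟨G, by rw [hm']; exact h1, h2⟩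
  · generalize s - 2 = B
    ring
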